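/- Let ρ be a 4×4 density matrix and A a 4×4 Hermitian matrix with simple eigenvalues 3/2, 1/2, −1/2, −3/2 and orthonormal eigenvectors |1⟩, |2⟩, |3⟩, |4⟩, and set p_j = ⟨j|ρ|j⟩. Then, with ⟨X⟩ = Tr[ρX] and V(X) = ⟨X²⟩ − ⟨X⟩², one has p_1² + p_2² + p_3² + p_4² = 1 − [ (5/9)·V(A³) + (1/4)·V(A²) + (365/144)·V(A) − (41/18)·(⟨A⁴⟩ − ⟨A⟩⟨A³⟩) ]. Equivalently, the collision entropy satisfies H₂(A) = −ln(Σ_j p_j²) = −ln{1 − [(5/9)V(A³) + (1/4)V(A²) + (365/144)V(A) − (41/18)(⟨A⁴⟩ − ⟨A⟩⟨A³⟩)]}. -/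

import Mathlib

open Matrix ComplexOrder

lemma vecMulVec_mul_vecMulVec' (u w x y : Fin 4 → ℂ) :
    vecMulVec u w * vecMulVec x y = (w ⬝ᵥ x) • vecMulVec u y := by
  ext i k
  simp only [mul_apply, vecMulVec_apply, Matrix.smul_apply, smul_eq_mul, dotProduct,
    Finset.sum_mul]
  apply Finset.sum_congr rfl
  intros; ring

lemma trace_mul_vecMulVec (ρ : Matrix (Fin 4) (Fin 4) ℂ) (u w : Fin 4 → ℂ) :
    (ρ * vecMulVec u w).trace = w ⬝ᵥ ρ *ᵥ u := by
  simp only [trace, diag_apply, mul_apply, vecMulVec_apply, dotProduct, mulVec,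
    Finset.mul_sum]
  apply Finset.sum_congr rfl; intros
  apply Finset.sum_congr rfl; intros; ring

/-- Eq. (31): for a spin-3/2 observable `A` (simple eigenvalues `3/2, 1/2, −1/2, −3/2`)
with moments `m_k = ⟨A^k⟩ = Tr[ρ A^k]` (so `V(A) = m₂ − m₁²`, `V(A²) = m₄ − m₂²`,
`V(A³) = m₆ − m₃²`, `⟨A⁴⟩ − ⟨A⟩⟨A³⟩ = m₄ − m₁ m₃`), one has
`Σ_j p_j² = 1 − [(5/9)V(A³) + (1/4)V(A²) + (365/144)V(A) − (41/18)(⟨A⁴⟩ − ⟨A⟩⟨A³⟩)]`,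
equivalently the corresponding formula for the collision entropy `H₂(A)`. -/
theorem spin32_collision_entropy_from_variances
    (ρ A : Matrix (Fin 4) (Fin 4) ℂ)
    (hρ : ρ.PosSemidef) (hρtr : ρ.trace = 1)
    (v : Fin 4 → Fin 4 → ℂ)
    (hv : ∀ i j, star (v i) ⬝ᵥ v j = if i = j then 1 else 0)
    (hA : A = (3 / 2 : ℂ) • vecMulVec (v 0) (star (v 0)) +
              (1 / 2 : ℂ) • vecMulVec (v 1) (star (v 1)) -
              (1 / 2 : ℂ) • vecMulVec (v 2) (star (v 2)) -
              (3 / 2 : ℂ) • vecMulVec (v 3) (star (v 3)))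
    (p : Fin 4 → ℝ)
    (hp : ∀ j, star (v j) ⬝ᵥ ρ *ᵥ v j = (p j : ℂ))
    (m1 m2 m3 m4 m6 : ℝ)
    (hm1 : (ρ * A).trace = (m1 : ℂ))
    (hm2 : (ρ * A ^ 2).trace = (m2 : ℂ))
    (hm3 : (ρ * A ^ 3).trace = (m3 : ℂ))
    (hm4 : (ρ * A ^ 4).trace = (m4 : ℂ))
    (hm6 : (ρ * A ^ 6).trace = (m6 : ℂ)) :
    p 0 ^ 2 + p 1 ^ 2 + p 2 ^ 2 + p 3 ^ 2 =
      1 - ((5 / 9) * (m6 - m3 ^ 2) + (1 / 4) * (m4 - m2 ^ 2) +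
        (365 / 144) * (m2 - m1 ^ 2) - (41 / 18) * (m4 - m1 * m3)) ∧
    -Real.log (p 0 ^ 2 + p 1 ^ 2 + p 2 ^ 2 + p 3 ^ 2) =
      -Real.log (1 - ((5 / 9) * (m6 - m3 ^ 2) + (1 / 4) * (m4 - m2 ^ 2) +
        (365 / 144) * (m2 - m1 ^ 2) - (41 / 18) * (m4 - m1 * m3))) := by
  set P : Fin 4 → Matrix (Fin 4) (Fin 4) ℂ :=
    fun j => vecMulVec (v j) (star (v j)) with hPdef
  have hPP : ∀ i j, P i * P j = if i = j then P i else 0 := by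
    intro i j
    rw [hPdef]
    simp only
    rw [vecMulVec_mul_vecMulVec', hv]
    by_cases h : i = j
    · subst h; simp
    · simp [h]
  -- A as a combination with plus signs
  have hA' : A = (3/2 : ℂ) • P 0 + (1/2 : ℂ) • P 1 + (-(1/2) : ℂ) • P 2 +
      (-(3/2) : ℂ) • P 3 := by
    rw [hA]; module
  -- multiplication of spectral combinations
  have Tmul : ∀ a0 a1 a2 a3 b0 b1 b2 b3 : ℂ,
      (a0 • P 0 + a1 • P 1 + a2 • P 2 + a3 • P 3) *
      (b0 • P 0 + b1 • P 1 + b2 • P 2 + b3 • P 3) =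
      (a0*b0) • P 0 + (a1*b1) • P 1 + (a2*b2) • P 2 + (a3*b3) • P 3 := by
    intro a0 a1 a2 a3 b0 b1 b2 b3
    simp [add_mul, mul_add, smul_mul_assoc, mul_smul_comm, hPP, smul_smul]
    module
  have hA2 : A^2 = (9/4 : ℂ) • P 0 + (1/4 : ℂ) • P 1 + (1/4 : ℂ) • P 2 +
      (9/4 : ℂ) • P 3 := by
    rw [pow_two, hA', Tmul]; norm_num
  have hA3 : A^3 = (27/8 : ℂ) • P 0 + (1/8 : ℂ) • P 1 + (-(1/8) : ℂ) • P 2 +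
      (-(27/8) : ℂ) • P 3 := by
    rw [pow_succ, hA2, hA', Tmul]; norm_num
  have hA4 : A^4 = (81/16 : ℂ) • P 0 + (1/16 : ℂ) • P 1 + (1/16 : ℂ) • P 2 +
      (81/16 : ℂ) • P 3 := by
    rw [pow_succ, hA3, hA', Tmul]; norm_num
  have hA6 : A^6 = (729/64 : ℂ) • P 0 + (1/64 : ℂ) • P 1 + (1/64 : ℂ) • P 2 +
      (729/64 : ℂ) • P 3 := by
    have : A^6 = A^4 * A^2 := by rw [← pow_add]
    rw [this, hA4, hA2, Tmul]; norm_num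
  -- trace of ρ * P j is p j
  have htrP : ∀ j, (ρ * P j).trace = (p j : ℂ) := by
    intro j
    rw [hPdef]
    simp only
    rw [trace_mul_vecMulVec, hp]
  have htrc : ∀ a0 a1 a2 a3 : ℂ,
      (ρ * (a0 • P 0 + a1 • P 1 + a2 • P 2 + a3 • P 3)).trace =
      a0 * p 0 + a1 * p 1 + a2 * p 2 + a3 * p 3 := by
    intro a0 a1 a2 a3
    simp only [mul_add, mul_smul_comm, trace_add, trace_smul, htrP, smul_eq_mul]
  -- sum of projectors is identity
  have hsumP : P 0 + P 1 + P 2 + P 3 = 1 := by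
    set B : Matrix (Fin 4) (Fin 4) ℂ := Matrix.of (fun i j => v j i) with hB
    have hBu : Bᴴ * B = 1 := by
      ext i j
      simp only [mul_apply, conjTranspose_apply, hB, of_apply, one_apply]
      have := hv i j
      simpa [dotProduct, mul_comm] using this
    have hBu' : B * Bᴴ = 1 := mul_eq_one_comm.mp hBu
    calc P 0 + P 1 + P 2 + P 3 = B * Bᴴ := by
          ext i k
          simp [hPdef, vecMulVec_apply, mul_apply, conjTranspose_apply, hB,
            Fin.sum_univ_four, Pi.star_apply]
      _ = 1 := hBu'
  have hsum : p 0 + p 1 + p 2 + p 3 = 1 := by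
    have h1 : (ρ * (P 0 + P 1 + P 2 + P 3)).trace = ((p 0 + p 1 + p 2 + p 3 : ℝ) : ℂ) := by
      simp only [mul_add, trace_add, htrP]; push_cast; ring
    rw [hsumP, mul_one, hρtr] at h1
    exact_mod_cast h1.symm
  -- real moment equations
  have E1 : m1 = 3/2 * p 0 + 1/2 * p 1 - 1/2 * p 2 - 3/2 * p 3 := by
    have h := hm1
    rw [hA', htrc] at h
    have : (m1 : ℂ) = ((3/2 * p 0 + 1/2 * p 1 - 1/2 * p 2 - 3/2 * p 3 : ℝ) : ℂ) := by
      rw [← h]; push_cast; ring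
    exact_mod_cast this
  have E2 : m2 = 9/4 * p 0 + 1/4 * p 1 + 1/4 * p 2 + 9/4 * p 3 := by
    have h := hm2
    rw [hA2, htrc] at h
    have : (m2 : ℂ) = ((9/4 * p 0 + 1/4 * p 1 + 1/4 * p 2 + 9/4 * p 3 : ℝ) : ℂ) := by
      rw [← h]; push_cast; ring
    exact_mod_cast this
  have E3 : m3 = 27/8 * p 0 + 1/8 * p 1 - 1/8 * p 2 - 27/8 * p 3 := by
    have h := hm3
    rw [hA3, htrc] at h
    have : (m3 : ℂ) = ((27/8 * p 0 + 1/8 * p 1 - 1/8 * p 2 - 27/8 * p 3 : ℝ) : ℂ) := by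
      rw [← h]; push_cast; ring
    exact_mod_cast this
  have E4 : m4 = 81/16 * p 0 + 1/16 * p 1 + 1/16 * p 2 + 81/16 * p 3 := by
    have h := hm4
    rw [hA4, htrc] at h
    have : (m4 : ℂ) = ((81/16 * p 0 + 1/16 * p 1 + 1/16 * p 2 + 81/16 * p 3 : ℝ) : ℂ) := by
      rw [← h]; push_cast; ring
    exact_mod_cast this
  have E6 : m6 = 729/64 * p 0 + 1/64 * p 1 + 1/64 * p 2 + 729/64 * p 3 := by
    have h := hm6
    rw [hA6, htrc] at h
    have : (m6 : ℂ) = ((729/64 * p 0 + 1/64 * p 1 + 1/64 * p 2 + 729/64 * p 3 : ℝ) : ℂ) := by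
      rw [← h]; push_cast; ring
    exact_mod_cast this
  have key : p 0 ^ 2 + p 1 ^ 2 + p 2 ^ 2 + p 3 ^ 2 =
      1 - ((5 / 9) * (m6 - m3 ^ 2) + (1 / 4) * (m4 - m2 ^ 2) +
        (365 / 144) * (m2 - m1 ^ 2) - (41 / 18) * (m4 - m1 * m3)) := by
    rw [E1, E2, E3, E4, E6]
    linear_combination (1 - 49/64 * p 0 + 31/64 * p 1 + 31/64 * p 2 - 49/64 * p 3) * hsum
  exact ⟨key, by rw [key]⟩
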